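/- Parallel composition of iposets is commutative up to composition with symmetries: for iposets P₁ : n₁ → m₁ and P₂ : n₂ → m₂ there exist symmetries σ : (n₁+n₂) → (n₁+n₂) and τ : (m₁+m₂) → (m₁+m₂) such that P₁ ⊗ P₂ ≅ σ * (P₂ ⊗ P₁) * τ. -/

import Mathlib

/-- Interval order condition for a strict order relation. -/
def IsIntervalOrderRel {α : Type} (lt : α → α → Prop) : Prop :=
  ∀ w x y z, lt w y → lt x z → lt w z ∨ lt x y

/-- Serial composition (ordinal sum) of two strict orders. -/
def serialLt {α β : Type} (r : α → α → Prop) (s : β → β → Prop) :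
    α ⊕ β → α ⊕ β → Prop
  | .inl a, .inl b => r a b
  | .inr a, .inr b => s a b
  | .inl _, .inr _ => True
  | .inr _, .inl _ => False

/-- Parallel composition (disjoint union) of two strict orders. -/
def parallelLt {α β : Type} (r : α → α → Prop) (s : β → β → Prop) :
    α ⊕ β → α ⊕ β → Prop
  | .inl a, .inl b => r a b
  | .inr a, .inr b => s a b
  | _, _ => False

/-- A poset with interfaces: a finite strict poset with injective interface
maps from the discrete posets `[n]` (onto minimal elements) and `[m]` (onto
maximal elements). -/
structure Iposet (n m : ℕ) where
  carrier : Type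
  fin : Finite carrier
  lt : carrier → carrier → Prop
  irrefl : ∀ x, ¬ lt x x
  trans : ∀ x y z, lt x y → lt y z → lt x z
  s : Fin n → carrier
  t : Fin m → carrier
  s_inj : Function.Injective s
  t_inj : Function.Injective t
  s_min : ∀ i x, ¬ lt x (s i)
  t_max : ∀ i x, ¬ lt (t i) x

namespace Iposet

/-- Parallel composition of iposets. -/
def par {n₁ m₁ n₂ m₂ : ℕ} (P : Iposet n₁ m₁) (Q : Iposet n₂ m₂) :
    Iposet (n₁ + n₂) (m₁ + m₂) where
  carrier := P.carrier ⊕ Q.carrier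
  fin := by have := P.fin; have := Q.fin; exact inferInstance
  lt a b := match a, b with
    | .inl x, .inl y => P.lt x y
    | .inr x, .inr y => Q.lt x y
    | _, _ => False
  irrefl := by
    rintro (x | x) h
    · exact P.irrefl x h
    · exact Q.irrefl x h
  trans := by
    rintro (x | x) (y | y) (z | z) h1 h2 <;>
      first
        | exact P.trans _ _ _ h1 h2
        | exact Q.trans _ _ _ h1 h2
        | exact h1.elim
        | exact h2.elim
  s := fun i =>
    if h : (i : ℕ) < n₁ then .inl (P.s ⟨i, h⟩)
    else .inr (Q.s ⟨(i : ℕ) - n₁, by have := i.isLt; omega⟩)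
  t := fun i =>
    if h : (i : ℕ) < m₁ then .inl (P.t ⟨i, h⟩)
    else .inr (Q.t ⟨(i : ℕ) - m₁, by have := i.isLt; omega⟩)
  s_inj := by
    intro i j h
    rcases Nat.lt_or_ge (i : ℕ) n₁ with hi | hi <;>
      rcases Nat.lt_or_ge (j : ℕ) n₁ with hj | hj
    · simp only [dif_pos hi, dif_pos hj] at h
      have h2 := P.s_inj (Sum.inl.inj h)
      simp only [Fin.mk.injEq] at h2
      exact Fin.ext h2
    · simp only [dif_pos hi, dif_neg (Nat.not_lt.mpr hj)] at h
      exact absurd h (by simp)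
    · simp only [dif_neg (Nat.not_lt.mpr hi), dif_pos hj] at h
      exact absurd h (by simp)
    · simp only [dif_neg (Nat.not_lt.mpr hi), dif_neg (Nat.not_lt.mpr hj)] at h
      have h2 := Q.s_inj (Sum.inr.inj h)
      simp only [Fin.mk.injEq] at h2
      exact Fin.ext (by omega)
  t_inj := by
    intro i j h
    rcases Nat.lt_or_ge (i : ℕ) m₁ with hi | hi <;>
      rcases Nat.lt_or_ge (j : ℕ) m₁ with hj | hj
    · simp only [dif_pos hi, dif_pos hj] at h
      have h2 := P.t_inj (Sum.inl.inj h)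
      simp only [Fin.mk.injEq] at h2
      exact Fin.ext h2
    · simp only [dif_pos hi, dif_neg (Nat.not_lt.mpr hj)] at h
      exact absurd h (by simp)
    · simp only [dif_neg (Nat.not_lt.mpr hi), dif_pos hj] at h
      exact absurd h (by simp)
    · simp only [dif_neg (Nat.not_lt.mpr hi), dif_neg (Nat.not_lt.mpr hj)] at h
      have h2 := Q.t_inj (Sum.inr.inj h)
      simp only [Fin.mk.injEq] at h2
      exact Fin.ext (by omega)
  s_min := by
    intro i a
    rcases Nat.lt_or_ge (i : ℕ) n₁ with hi | hi
    · simp only [dif_pos hi]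
      rcases a with x | x
      · exact P.s_min _ x
      · exact fun h => h
    · simp only [dif_neg (Nat.not_lt.mpr hi)]
      rcases a with x | x
      · exact fun h => h
      · exact Q.s_min _ x
  t_max := by
    intro i a
    rcases Nat.lt_or_ge (i : ℕ) m₁ with hi | hi
    · simp only [dif_pos hi]
      rcases a with x | x
      · exact P.t_max _ x
      · exact fun h => h
    · simp only [dif_neg (Nat.not_lt.mpr hi)]
      rcases a with x | x
      · exact fun h => h
      · exact Q.t_max _ x

open Classical in
/-- Gluing composition of iposets: targets of `P` are identified with sources
of `Q`, and every non-target point of `P` is ordered below every non-source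
point of `Q`. -/
noncomputable def glue {n m k : ℕ} (P : Iposet n m) (Q : Iposet m k) :
    Iposet n k where
  carrier := P.carrier ⊕ {q : Q.carrier // ¬ ∃ j, Q.s j = q}
  fin := by have := P.fin; have := Q.fin; exact inferInstance
  lt a b := match a, b with
    | .inl x, .inl y => P.lt x y
    | .inl x, .inr q => (¬ ∃ i, P.t i = x) ∨ (∃ i, P.t i = x ∧ Q.lt (Q.s i) q.val)
    | .inr p, .inr q => Q.lt p.val q.val
    | .inr _, .inl _ => False
  irrefl := by
    rintro (x | q) h
    · exact P.irrefl x h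
    · exact Q.irrefl q.val h
  trans := by
    rintro (x | x) (y | y) (z | z) h1 h2
    · exact P.trans _ _ _ h1 h2
    · left; rintro ⟨j, rfl⟩; exact P.t_max j y h1
    · exact h2.elim
    · rcases h1 with h1 | ⟨i, hi, hlt⟩
      · exact Or.inl h1
      · exact Or.inr ⟨i, hi, Q.trans _ _ _ hlt h2⟩
    · exact h1.elim
    · exact h1.elim
    · exact h2.elim
    · exact Q.trans _ _ _ h1 h2
  s := fun i => .inl (P.s i)
  t := fun i =>
    if h : ∃ j, Q.s j = Q.t i then .inl (P.t h.choose) else .inr ⟨Q.t i, h⟩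
  s_inj := fun i j h => P.s_inj (Sum.inl.inj h)
  t_inj := by
    intro i j h
    by_cases hi : ∃ a, Q.s a = Q.t i <;> by_cases hj : ∃ a, Q.s a = Q.t j
    · simp only [dif_pos hi, dif_pos hj] at h
      have h2 := P.t_inj (Sum.inl.inj h)
      apply Q.t_inj
      rw [← hi.choose_spec, ← hj.choose_spec, h2]
    · simp only [dif_pos hi, dif_neg hj] at h
      exact absurd h (by simp)
    · simp only [dif_neg hi, dif_pos hj] at h
      exact absurd h (by simp)
    · simp only [dif_neg hi, dif_neg hj, Sum.inr.injEq, Subtype.mk.injEq] at h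
      exact Q.t_inj h
  s_min := by
    rintro i (x | q) h
    · exact P.s_min i x h
    · exact h
  t_max := by
    intro i a
    by_cases hi : ∃ j, Q.s j = Q.t i
    · simp only [dif_pos hi]
      rcases a with x | q
      · exact P.t_max _ x
      · rintro (h | ⟨i', hi', hlt⟩)
        · exact h ⟨hi.choose, rfl⟩
        · have he : i' = hi.choose := P.t_inj hi'
          subst he
          rw [hi.choose_spec] at hlt
          exact Q.t_max i q.val hlt
    · simp only [dif_neg hi]
      rcases a with x | q
      · exact fun h => h
      · exact fun h => Q.t_max i q.val h

/-- The empty iposet. -/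
def ipoEmpty : Iposet 0 0 where
  carrier := PEmpty
  fin := inferInstance
  lt _ _ := False
  irrefl _ h := h
  trans := by intro x; exact x.elim
  s := Fin.elim0
  t := Fin.elim0
  s_inj := by intro i; exact i.elim0
  t_inj := by intro i; exact i.elim0
  s_min := fun i => i.elim0
  t_max := fun i => i.elim0

/-- The singleton iposet with empty source and empty target interface. -/
def ipo00 : Iposet 0 0 where
  carrier := PUnit
  fin := inferInstance
  lt _ _ := False
  irrefl _ h := h
  trans := by intro _ _ _ h; exact h.elim
  s := Fin.elim0
  t := Fin.elim0
  s_inj := by intro i; exact i.elim0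
  t_inj := by intro i; exact i.elim0
  s_min := fun i => i.elim0
  t_max := fun i => i.elim0

/-- The singleton iposet with empty source and full target interface. -/
def ipo01 : Iposet 0 1 where
  carrier := PUnit
  fin := inferInstance
  lt _ _ := False
  irrefl _ h := h
  trans := by intro _ _ _ h; exact h.elim
  s := Fin.elim0
  t := fun _ => PUnit.unit
  s_inj := by intro i; exact i.elim0
  t_inj := by intro i j _; exact Subsingleton.elim i j
  s_min := fun i => i.elim0
  t_max := fun _ _ h => h

/-- The singleton iposet with full source and empty target interface. -/
def ipo10 : Iposet 1 0 where
  carrier := PUnit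
  fin := inferInstance
  lt _ _ := False
  irrefl _ h := h
  trans := by intro _ _ _ h; exact h.elim
  s := fun _ => PUnit.unit
  t := Fin.elim0
  s_inj := by intro i j _; exact Subsingleton.elim i j
  t_inj := by intro i; exact i.elim0
  s_min := fun _ _ h => h
  t_max := fun i => i.elim0

/-- The singleton iposet with full source and full target interface. -/
def ipo11 : Iposet 1 1 where
  carrier := PUnit
  fin := inferInstance
  lt _ _ := False
  irrefl _ h := h
  trans := by intro _ _ _ h; exact h.elim
  s := fun _ => PUnit.unit
  t := fun _ => PUnit.unit
  s_inj := by intro i j _; exact Subsingleton.elim i j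
  t_inj := by intro i j _; exact Subsingleton.elim i j
  s_min := fun _ _ h => h
  t_max := fun _ _ h => h

/-- The identity iposet `n → n`: the discrete poset on `n` points with both
interface maps the identity. -/
def ipoId (n : ℕ) : Iposet n n where
  carrier := Fin n
  fin := inferInstance
  lt _ _ := False
  irrefl _ h := h
  trans := by intro _ _ _ h; exact h.elim
  s := id
  t := id
  s_inj := fun _ _ h => h
  t_inj := fun _ _ h => h
  s_min := fun _ _ h => h
  t_max := fun _ _ h => h

/-- Isomorphism of iposets: an order-preserving and order-reflecting bijection
commuting with the interface maps (the interface arities must agree). -/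
def Iso {n m n' m' : ℕ} (P : Iposet n m) (Q : Iposet n' m') : Prop :=
  n = n' ∧ m = m' ∧
  ∃ f : P.carrier ≃ Q.carrier,
    (∀ x y, P.lt x y ↔ Q.lt (f x) (f y)) ∧
    (∀ (i : Fin n) (j : Fin n'), (i : ℕ) = (j : ℕ) → f (P.s i) = Q.s j) ∧
    (∀ (i : Fin m) (j : Fin m'), (i : ℕ) = (j : ℕ) → f (P.t i) = Q.t j)

/-- `Subsu P Q` : `P` is subsumed by `Q`, i.e. there is an interface-preserving
order-reflecting bijection from `P` to `Q`. -/
def Subsu {n m : ℕ} (P Q : Iposet n m) : Prop :=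
  ∃ f : P.carrier ≃ Q.carrier,
    (∀ x y, Q.lt (f x) (f y) → P.lt x y) ∧
    (∀ i, f (P.s i) = Q.s i) ∧ (∀ i, f (P.t i) = Q.t i)

/-- Isomorphism of the underlying posets, ignoring interfaces. -/
def PosetIso {n m n' m' : ℕ} (P : Iposet n m) (Q : Iposet n' m') : Prop :=
  ∃ f : P.carrier ≃ Q.carrier, ∀ x y, P.lt x y ↔ Q.lt (f x) (f y)

/-- An iposet is discrete if its order relation is empty. -/
def IsDiscrete {n m : ℕ} (P : Iposet n m) : Prop := ∀ x y, ¬ P.lt x y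

/-- A starter is a discrete iposet whose target interface map is bijective. -/
def IsStarter {n m : ℕ} (P : Iposet n m) : Prop :=
  IsDiscrete P ∧ Function.Bijective P.t

/-- A terminator is a discrete iposet whose source interface map is bijective. -/
def IsTerminator {n m : ℕ} (P : Iposet n m) : Prop :=
  IsDiscrete P ∧ Function.Bijective P.s

/-- A symmetry is a discrete iposet with both interface maps bijective. -/
def IsSymmetry {n m : ℕ} (P : Iposet n m) : Prop :=
  IsDiscrete P ∧ Function.Bijective P.s ∧ Function.Bijective P.t

/-- Interface consistency: for points lying in both interfaces, the numbering
of the source interface agrees with that of the target interface. -/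
def InterfaceConsistent {n m : ℕ} (P : Iposet n m) : Prop :=
  ∀ (i j : Fin n) (i' j' : Fin m),
    P.s i = P.t i' → P.s j = P.t j' → ((i : ℕ) < (j : ℕ) ↔ (i' : ℕ) < (j' : ℕ))

/-- An iposet is connected if its underlying poset is nonempty and any two
points are joined by a zigzag of order relations. -/
def Connected {n m : ℕ} (P : Iposet n m) : Prop :=
  Nonempty P.carrier ∧
    ∀ x y, Relation.ReflTransGen (fun a b => P.lt a b ∨ P.lt b a) x y

/-- The interval order condition on the underlying poset of an iposet. -/
def IsIntervalOrder {n m : ℕ} (P : Iposet n m) : Prop :=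
  ∀ w x y z, P.lt w y → P.lt x z → P.lt w z ∨ P.lt x y

/-- The class of gluing-parallel iposets: generated (up to isomorphism) from
the empty iposet and the four singleton iposets by gluing and parallel
composition. -/
inductive IsGP : {n m : ℕ} → Iposet n m → Prop
  | empty : IsGP ipoEmpty
  | s00 : IsGP ipo00
  | s01 : IsGP ipo01
  | s10 : IsGP ipo10
  | s11 : IsGP ipo11
  | glue {n m k : ℕ} {P : Iposet n m} {Q : Iposet m k} :
      IsGP P → IsGP Q → IsGP (P.glue Q)
  | par {n₁ m₁ n₂ m₂ : ℕ} {P : Iposet n₁ m₁} {Q : Iposet n₂ m₂} :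
      IsGP P → IsGP Q → IsGP (P.par Q)
  | iso {n m n' m' : ℕ} {P : Iposet n m} {Q : Iposet n' m'} :
      IsGP P → Iso P Q → IsGP Q

/-- The ⊗-closure of the four singleton iposets (up to isomorphism):
parallel compositions of finitely many singletons. -/
inductive InParSingles : {n m : ℕ} → Iposet n m → Prop
  | s00 : InParSingles ipo00
  | s01 : InParSingles ipo01
  | s10 : InParSingles ipo10
  | s11 : InParSingles ipo11
  | par {n₁ m₁ n₂ m₂ : ℕ} {P : Iposet n₁ m₁} {Q : Iposet n₂ m₂} :
      InParSingles P → InParSingles Q → InParSingles (P.par Q)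
  | iso {n m n' m' : ℕ} {P : Iposet n m} {Q : Iposet n' m'} :
      InParSingles P → Iso P Q → InParSingles Q

/-- The induced subiposet of a poset (iposet with empty interfaces) on a
subset of its points. -/
def restrict (P : Iposet 0 0) (A : Set P.carrier) : Iposet 0 0 where
  carrier := {x : P.carrier // x ∈ A}
  fin := by have := P.fin; exact inferInstance
  lt a b := P.lt a.val b.val
  irrefl a := P.irrefl a.val
  trans := fun a b c h1 h2 => P.trans _ _ _ h1 h2
  s := Fin.elim0
  t := Fin.elim0
  s_inj := by intro i; exact i.elim0
  t_inj := by intro i; exact i.elim0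
  s_min := fun i => i.elim0
  t_max := fun i => i.elim0

/-! ### Auxiliary material for `par_comm_up_to_symmetry` -/

/-- Swap the two blocks of `Fin (a + b)`. -/
def swapFin (a b : ℕ) (i : Fin (a + b)) : Fin (b + a) :=
  ⟨if (i : ℕ) < a then (i : ℕ) + b else (i : ℕ) - a, by
    have := i.isLt; split <;> omega⟩

theorem swapFin_val (a b : ℕ) (i : Fin (a + b)) :
    (swapFin a b i : ℕ) = if (i : ℕ) < a then (i : ℕ) + b else (i : ℕ) - a := rfl

theorem swapFin_swapFin (a b : ℕ) (i : Fin (a + b)) :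
    swapFin b a (swapFin a b i) = i := by
  have := i.isLt
  apply Fin.ext
  rw [swapFin_val, swapFin_val]
  split <;> split <;> omega

theorem swapFin_bijective (a b : ℕ) : Function.Bijective (swapFin a b) :=
  Function.bijective_iff_has_inverse.mpr
    ⟨swapFin b a, swapFin_swapFin a b, swapFin_swapFin b a⟩

/-- The symmetry whose target numbering swaps the two blocks. -/
def symTgt (a b : ℕ) : Iposet (a + b) (b + a) where
  carrier := Fin (a + b)
  fin := inferInstance
  lt _ _ := False
  irrefl _ h := h
  trans _ _ _ h := h.elim
  s := id
  t := swapFin b a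
  s_inj := fun _ _ h => h
  t_inj := (swapFin_bijective b a).injective
  s_min := fun _ _ h => h
  t_max := fun _ _ h => h

/-- The symmetry whose source numbering swaps the two blocks. -/
def symSrc (a b : ℕ) : Iposet (a + b) (b + a) where
  carrier := Fin (b + a)
  fin := inferInstance
  lt _ _ := False
  irrefl _ h := h
  trans _ _ _ h := h.elim
  s := swapFin a b
  t := id
  s_inj := (swapFin_bijective a b).injective
  t_inj := fun _ _ h => h
  s_min := fun _ _ h => h
  t_max := fun _ _ h => h

theorem symTgt_isSymmetry (a b : ℕ) : (symTgt a b).IsSymmetry :=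
  ⟨fun _ _ h => h, Function.bijective_id, swapFin_bijective b a⟩

theorem symSrc_isSymmetry (a b : ℕ) : (symSrc a b).IsSymmetry :=
  ⟨fun _ _ h => h, swapFin_bijective a b, Function.bijective_id⟩

section

variable {n₁ m₁ n₂ m₂ : ℕ} (P₁ : Iposet n₁ m₁) (P₂ : Iposet n₂ m₂)

theorem par_s_def (i : Fin (n₁ + n₂)) :
    (P₁.par P₂).s i =
      if h : (i : ℕ) < n₁ then .inl (P₁.s ⟨i, h⟩)
      else .inr (P₂.s ⟨(i : ℕ) - n₁, by have := i.isLt; omega⟩) := rfl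

theorem par_t_def (i : Fin (m₁ + m₂)) :
    (P₁.par P₂).t i =
      if h : (i : ℕ) < m₁ then .inl (P₁.t ⟨i, h⟩)
      else .inr (P₂.t ⟨(i : ℕ) - m₁, by have := i.isLt; omega⟩) := rfl

theorem swap_par_s (i : Fin (n₁ + n₂)) :
    Sum.swap ((P₁.par P₂).s i) = (P₂.par P₁).s (swapFin n₁ n₂ i) := by
  have hi := i.isLt
  rw [par_s_def, par_s_def]
  by_cases h : (i : ℕ) < n₁
  · erw [dif_pos h, dif_neg (by rw [swapFin_val, if_pos h]; omega)]
    simp only [Sum.swap_inl, Sum.inr.injEq]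
    congr 1
    apply Fin.ext
    simp only [swapFin_val, if_pos h]
    omega
  · erw [dif_neg h, dif_pos (show (swapFin n₁ n₂ i : ℕ) < n₂ by
      rw [swapFin_val, if_neg h]; omega)]
    simp only [Sum.swap_inr, Sum.inl.injEq]
    congr 1
    apply Fin.ext; exact (by rw [swapFin_val, if_neg h] : _ = _).symm

theorem swap_par_t (i : Fin (m₁ + m₂)) :
    Sum.swap ((P₁.par P₂).t i) = (P₂.par P₁).t (swapFin m₁ m₂ i) := by
  have hi := i.isLt
  rw [par_t_def, par_t_def]
  by_cases h : (i : ℕ) < m₁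
  · erw [dif_pos h, dif_neg (by rw [swapFin_val, if_pos h]; omega)]
    simp only [Sum.swap_inl, Sum.inr.injEq]
    congr 1
    apply Fin.ext
    simp only [swapFin_val, if_pos h]
    omega
  · erw [dif_neg h, dif_pos (show (swapFin m₁ m₂ i : ℕ) < m₂ by
      rw [swapFin_val, if_neg h]; omega)]
    simp only [Sum.swap_inr, Sum.inl.injEq]
    congr 1
    apply Fin.ext; exact (by rw [swapFin_val, if_neg h] : _ = _).symm

theorem par_lt_swap (a b : P₁.carrier ⊕ P₂.carrier) :
    (P₁.par P₂).lt a b ↔ (P₂.par P₁).lt (Sum.swap a) (Sum.swap b) := by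
  rcases a with a | a <;> rcases b with b | b <;> exact Iff.rfl

open Classical in
theorem glue_t_def {n m k : ℕ} (P : Iposet n m) (Q : Iposet m k) (i : Fin k) :
    (P.glue Q).t i =
      if h : ∃ j, Q.s j = Q.t i then .inl (P.t h.choose)
      else .inr ⟨Q.t i, h⟩ := rfl

open Classical in
/-- The forward map of the commutativity isomorphism. -/
noncomputable def commFun :
    (P₁.par P₂).carrier →
      (((symTgt n₁ n₂).glue (P₂.par P₁)).glue (symSrc m₂ m₁)).carrier :=
  fun a =>
    if h : ∃ j, (P₂.par P₁).s j = Sum.swap a then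
      Sum.inl (Sum.inl (swapFin n₂ n₁ h.choose))
    else Sum.inl (Sum.inr ⟨Sum.swap a, h⟩)

/-- The inverse map of the commutativity isomorphism. -/
noncomputable def commInv :
    (((symTgt n₁ n₂).glue (P₂.par P₁)).glue (symSrc m₂ m₁)).carrier →
      (P₁.par P₂).carrier :=
  fun x => match x with
    | .inl (.inl i) => Sum.swap ((P₂.par P₁).s (swapFin n₁ n₂ i))
    | .inl (.inr q) => Sum.swap q.val
    | .inr q => (q.prop ⟨swapFin m₁ m₂ q.val, swapFin_swapFin m₁ m₂ q.val⟩).elim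

theorem commInv_commFun (a : (P₁.par P₂).carrier) :
    commInv P₁ P₂ (commFun P₁ P₂ a) = a := by
  unfold commFun
  by_cases h : ∃ j, (P₂.par P₁).s j = Sum.swap a
  · erw [dif_pos h]
    show Sum.swap ((P₂.par P₁).s (swapFin n₁ n₂ (swapFin n₂ n₁ h.choose))) = a
    erw [swapFin_swapFin, h.choose_spec, Sum.swap_swap]
  · erw [dif_neg h]
    show Sum.swap (Sum.swap a) = a
    exact Sum.swap_swap a

theorem commFun_commInv
    (x : (((symTgt n₁ n₂).glue (P₂.par P₁)).glue (symSrc m₂ m₁)).carrier) :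
    commFun P₁ P₂ (commInv P₁ P₂ x) = x := by
  rcases x with (i | q) | q
  · show commFun P₁ P₂ (Sum.swap ((P₂.par P₁).s (swapFin n₁ n₂ i))) = _
    unfold commFun
    have h : ∃ j, (P₂.par P₁).s j =
        Sum.swap (Sum.swap ((P₂.par P₁).s (swapFin n₁ n₂ i))) :=
      ⟨swapFin n₁ n₂ i, by erw [Sum.swap_swap]⟩
    erw [dif_pos h]
    have hc : h.choose = swapFin n₁ n₂ i := by
      apply (P₂.par P₁).s_inj
      erw [h.choose_spec, Sum.swap_swap]
    erw [hc, swapFin_swapFin]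
  · show commFun P₁ P₂ (Sum.swap q.val) = _
    unfold commFun
    have h : ¬ ∃ j, (P₂.par P₁).s j = Sum.swap (Sum.swap q.val) := by
      erw [Sum.swap_swap]; exact q.prop
    erw [dif_neg h]
    congr 1
    congr 1
    apply Subtype.ext
    exact Sum.swap_swap q.val
  · exact (q.prop ⟨swapFin m₁ m₂ q.val, swapFin_swapFin m₁ m₂ q.val⟩).elim

end

end Iposet

open Iposet in
/-- Parallel composition of iposets is commutative up to composition with
symmetries. -/
theorem par_comm_up_to_symmetry {n₁ m₁ n₂ m₂ : ℕ}
    (P₁ : Iposet n₁ m₁) (P₂ : Iposet n₂ m₂) :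
    ∃ (σ : Iposet (n₁ + n₂) (n₂ + n₁)) (τ : Iposet (m₂ + m₁) (m₁ + m₂)),
      IsSymmetry σ ∧ IsSymmetry τ ∧
      Iso (P₁.par P₂) ((σ.glue (P₂.par P₁)).glue τ) := by
  refine ⟨symTgt n₁ n₂, symSrc m₂ m₁, symTgt_isSymmetry n₁ n₂, symSrc_isSymmetry m₂ m₁,
    rfl, rfl,
    ⟨commFun P₁ P₂, commInv P₁ P₂, commInv_commFun P₁ P₂, commFun_commInv P₁ P₂⟩,
    ?_, ?_, ?_⟩
  · -- order iso
    intro a b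
    simp only [Equiv.coe_fn_mk]
    unfold commFun
    by_cases ha : ∃ j, (P₂.par P₁).s j = Sum.swap a <;>
      by_cases hb : ∃ j, (P₂.par P₁).s j = Sum.swap b
    · erw [dif_pos ha, dif_pos hb]
      constructor
      · intro h
        erw [par_lt_swap] at h
        rw [← hb.choose_spec] at h
        exact ((P₂.par P₁).s_min hb.choose _ h).elim
      · exact False.elim
    · erw [dif_pos ha, dif_neg hb]
      rw [par_lt_swap P₁ P₂ a b]
      constructor
      · intro h
        exact Or.inr ⟨ha.choose, rfl, by rw [ha.choose_spec]; exact h⟩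
      · rintro (h | ⟨i, hi, hlt⟩)
        · exact (h ⟨ha.choose, rfl⟩).elim
        · have hie : i = ha.choose := (swapFin_bijective n₂ n₁).injective hi
          subst hie
          rw [← ha.choose_spec]
          exact hlt
    · erw [dif_neg ha, dif_pos hb]
      constructor
      · intro h
        erw [par_lt_swap] at h
        rw [← hb.choose_spec] at h
        exact ((P₂.par P₁).s_min hb.choose _ h).elim
      · exact False.elim
    · erw [dif_neg ha, dif_neg hb]
      exact par_lt_swap P₁ P₂ a b
  · -- sources
    intro i j hij
    have hje : i = j := Fin.ext hij
    subst hje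
    simp only [Equiv.coe_fn_mk]
    unfold commFun
    have h : ∃ j', (P₂.par P₁).s j' = Sum.swap ((P₁.par P₂).s i) :=
      ⟨swapFin n₁ n₂ i, (swap_par_s P₁ P₂ i).symm⟩
    erw [dif_pos h]
    have hc : h.choose = swapFin n₁ n₂ i :=
      (P₂.par P₁).s_inj (h.choose_spec.trans (swap_par_s P₁ P₂ i))
    rw [hc, swapFin_swapFin]
    rfl
  · -- targets
    intro i j hij
    have hje : i = j := Fin.ext hij
    subst hje
    simp only [Equiv.coe_fn_mk]
    rw [glue_t_def]
    have hτ : ∃ a, (symSrc m₂ m₁).s a = (symSrc m₂ m₁).t i :=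
      ⟨swapFin m₁ m₂ i, swapFin_swapFin m₁ m₂ i⟩
    erw [dif_pos hτ]
    have hcτ : hτ.choose = swapFin m₁ m₂ i := by
      have hsp : swapFin m₂ m₁ hτ.choose = i := hτ.choose_spec
      have h2 := swapFin_swapFin m₂ m₁ hτ.choose
      rw [hsp] at h2
      exact h2.symm
    rw [hcτ]
    unfold commFun
    rw [glue_t_def]
    have hswap : Sum.swap ((P₁.par P₂).t i) = (P₂.par P₁).t (swapFin m₁ m₂ i) :=
      swap_par_t P₁ P₂ i
    by_cases h2 : ∃ a, (P₂.par P₁).s a = (P₂.par P₁).t (swapFin m₁ m₂ i)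
    · have h1 : ∃ j', (P₂.par P₁).s j' = Sum.swap ((P₁.par P₂).t i) := by
        rw [hswap]; exact h2
      erw [dif_pos h1, dif_pos h2]
      have hce : h1.choose = h2.choose := by
        apply (P₂.par P₁).s_inj
        rw [h1.choose_spec, h2.choose_spec, hswap]
      rw [hce]
      rfl
    · have h1 : ¬ ∃ j', (P₂.par P₁).s j' = Sum.swap ((P₁.par P₂).t i) := by
        rw [hswap]; exact h2
      erw [dif_neg h1, dif_neg h2]
      exact congrArg Sum.inl (congrArg Sum.inr (Subtype.ext hswap))
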